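/- For every n ≥ 3, the number of spanning trees of the wheel graph W_n equals L_{2n} − 2, where L_k denotes the k-th Lucas number; equivalently, the number of edge sets F of W_n such that the spanning subgraph of W_n with edge set F is a tree equals fib(2n−1) + fib(2n+1) − 2, where fib denotes the Fibonacci sequence with fib(1) = fib(2) = 1. -/

import Mathlib

open SimpleGraph

/-- The wheel graph `W_n` on vertex set `{0, 1, …, n}`: the hub `0` is adjacent to every
rim vertex `1, …, n`, and two rim vertices are adjacent iff their labels are consecutive
modulo `n`. -/
def wheelGraph (n : ℕ) : SimpleGraph (Fin (n + 1)) :=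
  SimpleGraph.fromRel (fun i j => i = 0 ∨ ((i.val : ZMod n) = (j.val : ZMod n) + 1))

/-- The set of spanning trees of a graph `G`, regarded as edge sets. -/
def spanningTreeSet {V : Type*} (G : SimpleGraph V) : Set (Set (Sym2 V)) :=
  {F | F ⊆ G.edgeSet ∧ (SimpleGraph.fromEdgeSet F).IsTree}

/-- The set of acyclic orientations of a graph `G`: relations orienting each edge of `G`
in exactly one direction, whose transitive closure is irreflexive. -/
def acyclicOrientationSet {V : Type*} (G : SimpleGraph V) : Set (V → V → Prop) :=
  {o | (∀ a b, o a b → G.Adj a b) ∧ (∀ a b, G.Adj a b → (o a b ↔ ¬ o b a)) ∧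
    (∀ a, ¬ Relation.TransGen o a a)}

private lemma exists_adj_dist {V : Type*} {G : SimpleGraph V} (hc : G.Connected)
    {w r : V} (hwr : w ≠ r) : ∃ u, G.Adj w u ∧ G.dist u r + 1 = G.dist w r := by
  obtain ⟨p, hp⟩ := hc.exists_walk_length_eq_dist w r
  have hpos : 0 < G.dist w r := hc.pos_dist_of_ne hwr
  have hnn : ¬ p.Nil := by
    intro hnil
    rw [SimpleGraph.Walk.nil_iff_length_eq] at hnil
    omega
  rw [SimpleGraph.Walk.not_nil_iff] at hnn
  obtain ⟨u, hadj, q, rfl⟩ := hnn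
  refine ⟨u, hadj, ?_⟩
  have h1 : G.dist u r ≤ q.length := SimpleGraph.dist_le q
  have h2 : G.dist w r ≤ G.dist u r + 1 := by
    obtain ⟨q', hq'⟩ := hc.exists_walk_length_eq_dist u r
    have := SimpleGraph.dist_le (SimpleGraph.Walk.cons hadj q')
    simpa [hq'] using this
  simp only [SimpleGraph.Walk.length_cons] at hp
  omega

private lemma card_le_of_connected {V : Type*} [Fintype V] [DecidableEq V]
    {G : SimpleGraph V} [Fintype G.edgeSet] (hc : G.Connected) :
    Fintype.card V ≤ G.edgeFinset.card + 1 := by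
  obtain ⟨r⟩ := hc.nonempty
  classical
  choose u hu hd using fun w (hw : w ≠ r) => exists_adj_dist hc hw
  have hinj : Set.InjOn (fun w => if hw : w = r then s(r, r) else s(w, u w hw))
      (Finset.univ.erase r) := by
    intro a ha b hb hab
    simp only [Finset.coe_erase, Set.mem_diff, Finset.mem_erase] at ha hb
    have har : a ≠ r := by simpa using ha
    have hbr : b ≠ r := by simpa using hb
    simp only [dif_neg har, dif_neg hbr, Sym2.eq_iff] at hab
    rcases hab with ⟨h1, _⟩ | ⟨h1, h2⟩
    · exact h1
    · exfalso
      have d1 := hd a har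
      have d2 := hd b hbr
      rw [← h1] at d2
      rw [h2] at d1
      omega
  have hmaps : ∀ w ∈ Finset.univ.erase r,
      (if hw : w = r then s(r, r) else s(w, u w hw)) ∈ G.edgeFinset := by
    intro w hw
    have hwr : w ≠ r := by simpa using hw
    rw [dif_neg hwr]
    simp only [SimpleGraph.mem_edgeFinset, SimpleGraph.mem_edgeSet]
    exact hu w hwr
  have := Finset.card_le_card_of_injOn _ hmaps hinj
  have hcard : (Finset.univ.erase r).card = Fintype.card V - 1 := by
    rw [Finset.card_erase_of_mem (Finset.mem_univ r), Finset.card_univ]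
  have hpos : 0 < Fintype.card V := Fintype.card_pos_iff.mpr ⟨r⟩
  omega

private lemma isTree_of_connected_of_card {V : Type*} [Fintype V] [DecidableEq V]
    {G : SimpleGraph V} [Fintype G.edgeSet] (hc : G.Connected)
    (hcard : G.edgeFinset.card + 1 = Fintype.card V) : G.IsTree := by
  refine ⟨hc, ?_⟩
  rw [SimpleGraph.isAcyclic_iff_forall_edge_isBridge]
  intro e he
  by_contra hbr
  induction e using Sym2.ind with
  | _ v w =>
  rw [SimpleGraph.isBridge_iff] at hbr
  rw [SimpleGraph.mem_edgeSet] at he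
  push_neg at hbr
  have hreach : (G \ fromEdgeSet {s(v, w)}).Reachable v w := hbr
  set G' : SimpleGraph V := G \ fromEdgeSet {s(v, w)} with hG'
  classical
  have hG'le : G' ≤ G := sdiff_le
  have hG'adj : ∀ a b, G.Adj a b → s(a, b) ≠ s(v, w) → G'.Adj a b := by
    intro a b hab hne
    simp only [hG', SimpleGraph.sdiff_adj, SimpleGraph.fromEdgeSet_adj]
    exact ⟨hab, by simp [hne]⟩
  -- G' is connected
  have hpre : ∀ a b, G.Reachable a b → G'.Reachable a b := by
    intro a b hab
    obtain ⟨p⟩ := hab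
    induction p with
    | nil => exact .refl _
    | @cons x y z h q ih =>
      refine Reachable.trans ?_ ih
      by_cases hxy : s(x, y) = s(v, w)
      · rw [Sym2.eq_iff] at hxy
        rcases hxy with ⟨rfl, rfl⟩ | ⟨rfl, rfl⟩
        · exact hreach
        · exact hreach.symm
      · exact (hG'adj _ _ h hxy).reachable
  have hc' : G'.Connected := by
    rw [SimpleGraph.connected_iff]
    exact ⟨fun a b => hpre a b (hc.preconnected a b), hc.nonempty⟩
  have hsub : G'.edgeFinset ⊆ G.edgeFinset := by
    intro e' he'
    simp only [SimpleGraph.mem_edgeFinset] at he' ⊢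
    exact SimpleGraph.edgeSet_mono hG'le he'
  have hnotmem : s(v, w) ∉ G'.edgeFinset := by
    simp only [SimpleGraph.mem_edgeFinset, SimpleGraph.mem_edgeSet, hG',
      SimpleGraph.sdiff_adj, SimpleGraph.fromEdgeSet_adj]
    intro hcon
    exact hcon.2 ⟨rfl, hcon.1.ne⟩
  have hmem : s(v, w) ∈ G.edgeFinset := by simpa [SimpleGraph.mem_edgeFinset] using he
  have hlt : G'.edgeFinset.card < G.edgeFinset.card :=
    Finset.card_lt_card (Finset.ssubset_iff_of_subset hsub |>.mpr ⟨_, hmem, hnotmem⟩)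
  have := card_le_of_connected hc'
  omega

private def noRLlin (k : ℕ) (f : Fin (k + 1) → Fin 3) : Prop :=
  ∀ i : Fin k, ¬(f i.castSucc = 2 ∧ f i.succ = 1)

private instance noRLlin_dec (k : ℕ) : DecidablePred (noRLlin k) := fun _ =>
  inferInstanceAs (Decidable (∀ _, _))

private abbrev Slin (k : ℕ) (a c : Fin 3) : Type :=
  {f : Fin (k + 1) → Fin 3 // noRLlin k f ∧ f 0 = a ∧ f (Fin.last k) = c}

private instance Slin_fintype (k : ℕ) (a c : Fin 3) : Fintype (Slin k a c) :=
  inferInstanceAs (Fintype {f // _})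

private lemma card_Slin_one (a c : Fin 3) :
    Fintype.card (Slin 1 a c) = if a = 2 ∧ c = 1 then 0 else 1 := by
  revert a c
  decide

private def stepEquiv2 (k : ℕ) (a c b : Fin 3) :
    {F : Slin (k + 2) a c // F.1 (Fin.castSucc (Fin.last (k + 1))) = b} ≃
      {F : Slin (k + 1) a b // ¬(b = 2 ∧ c = 1)} where
  toFun F :=
    ⟨⟨fun i => F.1.1 i.castSucc, by
      refine ⟨?_, ?_, ?_⟩
      · intro i
        have := F.1.2.1 i.castSucc
        rwa [Fin.succ_castSucc] at this
      · show F.1.1 (Fin.castSucc 0) = a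
        rw [Fin.castSucc_zero]
        exact F.1.2.2.1
      · exact F.2⟩, by
      rintro ⟨hb2, hc1⟩
      refine F.1.2.1 (Fin.last (k + 1)) ⟨?_, ?_⟩
      · rw [F.2, hb2]
      · rw [Fin.succ_last, F.1.2.2.2, hc1]⟩
  invFun G :=
    ⟨⟨Fin.snoc G.1.1 c, by
      refine ⟨?_, ?_, ?_⟩
      · intro i
        induction i using Fin.lastCases with
        | last =>
          rw [Fin.succ_last, Fin.snoc_castSucc, Fin.snoc_last, G.1.2.2.2]
          exact G.2
        | cast j =>
          rw [Fin.succ_castSucc, Fin.snoc_castSucc, Fin.snoc_castSucc]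
          exact G.1.2.1 j
      · have h0 : (0 : Fin (k + 3)) = Fin.castSucc 0 := rfl
        rw [h0, Fin.snoc_castSucc]
        exact G.1.2.2.1
      · rw [Fin.snoc_last]⟩, by
      have hh : (Fin.snoc G.1.1 c : Fin (k + 3) → Fin 3) (Fin.castSucc (Fin.last (k + 1))) =
          G.1.1 (Fin.last (k + 1)) := Fin.snoc_castSucc _ _ _
      exact hh.trans G.1.2.2.2⟩
  left_inv := by
    intro F
    apply Subtype.ext
    apply Subtype.ext
    funext i
    induction i using Fin.lastCases with
    | last =>
      exact (Fin.snoc_last (α := fun _ : Fin (k + 3) => Fin 3) (x := c)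
        (p := fun i => F.1.1 i.castSucc)).trans F.1.2.2.2.symm
    | cast j =>
      exact Fin.snoc_castSucc (α := fun _ : Fin (k + 3) => Fin 3) (x := c)
        (p := fun i => F.1.1 i.castSucc) (i := j)
  right_inv := by
    intro G
    apply Subtype.ext
    apply Subtype.ext
    funext i
    exact Fin.snoc_castSucc (α := fun _ : Fin (k + 3) => Fin 3) (x := c) (p := G.1.1) (i := i)

private def stepEquiv (k : ℕ) (a c : Fin 3) :
    Slin (k + 2) a c ≃ Σ b : Fin 3, {F : Slin (k + 1) a b // ¬(b = 2 ∧ c = 1)} :=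
  (Equiv.sigmaFiberEquiv (fun F : Slin (k + 2) a c =>
    F.1 (Fin.castSucc (Fin.last (k + 1))))).symm.trans
    (Equiv.sigmaCongrRight (fun b => stepEquiv2 k a c b))

private lemma card_step (k : ℕ) (a c : Fin 3) :
    Fintype.card (Slin (k + 2) a c) =
      ∑ b : Fin 3, if b = 2 ∧ c = 1 then 0 else Fintype.card (Slin (k + 1) a b) := by
  rw [Fintype.card_congr (stepEquiv k a c), Fintype.card_sigma]
  congr 1
  funext b
  by_cases hside : b = 2 ∧ c = 1
  · rw [if_pos hside]
    exact Fintype.card_eq_zero_iff.mpr ⟨fun F => F.2 hside⟩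
  · rw [if_neg hside]
    exact Fintype.card_congr (Equiv.subtypeUnivEquiv (fun _ => hside))

private def Etab (k : ℕ) (a c : Fin 3) : ℕ :=
  if a = 2 then (if c = 1 then Nat.fib (2 * k) else Nat.fib (2 * k + 1))
  else (if c = 1 then Nat.fib (2 * k + 1) else Nat.fib (2 * k + 2))

private lemma card_Slin (k : ℕ) (a c : Fin 3) :
    Fintype.card (Slin (k + 1) a c) = Etab k a c := by
  induction k generalizing c with
  | zero =>
    rw [card_Slin_one]
    rcases show a = 0 ∨ a = 1 ∨ a = 2 by omega with ha | ha | ha <;>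
      rcases show c = 0 ∨ c = 1 ∨ c = 2 by omega with hc | hc | hc <;>
      simp [Etab, ha, hc]
  | succ k ih =>
    rw [card_step]
    rw [Fin.sum_univ_three]
    rw [ih 0, ih 1, ih 2]
    have e1 : ¬((0 : Fin 3) = 2 ∧ c = 1) := by
      rintro ⟨h, _⟩; exact absurd h (by decide)
    have e2 : ¬((1 : Fin 3) = 2 ∧ c = 1) := by
      rintro ⟨h, _⟩; exact absurd h (by decide)
    rw [if_neg e1, if_neg e2]
    have f1 : Nat.fib (2 * k + 2) = Nat.fib (2 * k) + Nat.fib (2 * k + 1) := Nat.fib_add_two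
    have f2 : Nat.fib (2 * k + 3) = Nat.fib (2 * k + 1) + Nat.fib (2 * k + 2) := Nat.fib_add_two
    have f3 : Nat.fib (2 * k + 4) = Nat.fib (2 * k + 2) + Nat.fib (2 * k + 3) := Nat.fib_add_two
    have f4 : Nat.fib (2 * k + 2 + 1) = Nat.fib (2 * k + 3) := rfl
    have f5 : Nat.fib (2 * k + 2 + 2) = Nat.fib (2 * k + 4) := rfl
    have f6 : Nat.fib (2 * k + 1 + 1) = Nat.fib (2 * k + 2) := rfl
    have f7 : Nat.fib (2 * k + 1 + 2) = Nat.fib (2 * k + 3) := rfl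
    have hk1 : 2 * (k + 1) = 2 * k + 2 := by ring
    have hk2 : 2 * (k + 1) + 1 = 2 * k + 3 := by ring
    have hk3 : 2 * (k + 1) + 2 = 2 * k + 4 := by ring
    by_cases hc : c = 1
    · subst hc
      rw [if_pos ⟨rfl, rfl⟩]
      rcases show a = 0 ∨ a = 1 ∨ a = 2 by omega with ha | ha | ha <;> subst ha <;>
        simp [Etab, hk1, hk2, hk3] <;> omega
    · rw [if_neg (fun h => hc h.2)]
      rcases show a = 0 ∨ a = 1 ∨ a = 2 by omega with ha | ha | ha <;> subst ha <;>
        simp [Etab, hk1, hk2, hk3, hc] <;> omega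

section Wheel
variable {m : ℕ}

private lemma zmod_cast_nz {a : ℕ} (h0 : 0 < a) (h : a < m + 3) :
    ((a : ZMod (m + 3))) ≠ 0 := by
  intro hc
  have := ZMod.val_cast_of_lt h
  rw [hc, ZMod.val_zero] at this
  omega

private lemma zmod_one_nz : (1 : ZMod (m + 3)) ≠ 0 := by
  have := zmod_cast_nz (m := m) (a := 1) (by omega) (by omega)
  simpa using this

private lemma zmod_two_nz : (2 : ZMod (m + 3)) ≠ 0 := by
  have := zmod_cast_nz (m := m) (a := 2) (by omega) (by omega)
  simpa using this

private def rim (m : ℕ) (i : ZMod (m + 3)) : Fin (m + 3 + 1) :=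
  ⟨i.val + 1, by have := ZMod.val_lt i; omega⟩

private lemma rim_ne_zero (i : ZMod (m + 3)) : rim m i ≠ 0 := by
  simp [rim, Fin.ext_iff]

private lemma rim_injective : Function.Injective (rim m) := by
  intro i j hij
  simp only [rim, Fin.mk.injEq] at hij
  exact ZMod.val_injective _ (by omega)

private lemma rim_cast (i : ZMod (m + 3)) :
    (((rim m i : Fin (m + 3 + 1)).val : ℕ) : ZMod (m + 3)) = i + 1 := by
  show (((i.val + 1 : ℕ)) : ZMod (m + 3)) = i + 1
  push_cast
  rw [ZMod.natCast_val, ZMod.cast_id]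

private lemma rim_surj (a : Fin (m + 3 + 1)) (ha : a ≠ 0) : ∃ i, rim m i = a := by
  have hlt : a.val - 1 < m + 3 := by
    have := a.isLt
    omega
  refine ⟨((a.val - 1 : ℕ) : ZMod (m + 3)), ?_⟩
  simp only [rim, Fin.ext_iff]
  rw [ZMod.val_cast_of_lt hlt]
  have : a.val ≠ 0 := fun h => ha (Fin.ext h)
  omega

private lemma wheel_adj_hub (i : ZMod (m + 3)) : (wheelGraph (m + 3)).Adj (rim m i) 0 := by
  simp only [wheelGraph, SimpleGraph.fromRel_adj]
  exact ⟨rim_ne_zero i, Or.inr (Or.inl trivial)⟩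

private lemma wheel_adj_succ (i : ZMod (m + 3)) :
    (wheelGraph (m + 3)).Adj (rim m i) (rim m (i + 1)) := by
  simp only [wheelGraph, SimpleGraph.fromRel_adj]
  constructor
  · intro h
    have := rim_injective h
    exact zmod_one_nz (by linear_combination -this)
  · refine Or.inr (Or.inr ?_)
    rw [rim_cast, rim_cast]

private lemma wheel_adj_pred (i : ZMod (m + 3)) :
    (wheelGraph (m + 3)).Adj (rim m i) (rim m (i - 1)) := by
  have := (wheel_adj_succ (m := m) (i - 1)).symm
  simpa using this

private lemma wheel_adj_characterize {i : ZMod (m + 3)} {u : Fin (m + 3 + 1)}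
    (h : (wheelGraph (m + 3)).Adj (rim m i) u) :
    u = 0 ∨ u = rim m (i + 1) ∨ u = rim m (i - 1) := by
  by_cases hu : u = 0
  · exact Or.inl hu
  obtain ⟨j, rfl⟩ := rim_surj u hu
  simp only [wheelGraph, SimpleGraph.fromRel_adj] at h
  obtain ⟨hne, hrel⟩ := h
  rcases hrel with (h0 | h0) | (h0 | h0)
  · exact absurd h0 (rim_ne_zero i)
  · rw [rim_cast, rim_cast] at h0
    right; right
    have : j = i - 1 := by linear_combination -h0
    rw [this]
  · exact absurd h0 (rim_ne_zero j)
  · rw [rim_cast, rim_cast] at h0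
    right; left
    have : j = i + 1 := by linear_combination h0
    rw [this]

-- ## parent structure
private def parentV (m : ℕ) (p : ZMod (m + 3) → Fin 3) (i : ZMod (m + 3)) : Fin (m + 3 + 1) :=
  if p i = 0 then 0 else if p i = 1 then rim m (i - 1) else rim m (i + 1)

private def eo (m : ℕ) (p : ZMod (m + 3) → Fin 3) (i : ZMod (m + 3)) :
    Sym2 (Fin (m + 3 + 1)) := s(rim m i, parentV m p i)

private def Fp (m : ℕ) (p : ZMod (m + 3) → Fin 3) : Set (Sym2 (Fin (m + 3 + 1))) :=
  Set.range (eo m p)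

private def noRL (m : ℕ) (p : ZMod (m + 3) → Fin 3) : Prop :=
  ∀ i, ¬(p i = 2 ∧ p (i + 1) = 1)

private def good (m : ℕ) (p : ZMod (m + 3) → Fin 3) : Prop :=
  noRL m p ∧ p ≠ (fun _ => 1) ∧ p ≠ (fun _ => 2)

private lemma parentV_ne (p : ZMod (m + 3) → Fin 3) (i : ZMod (m + 3)) :
    rim m i ≠ parentV m p i := by
  unfold parentV
  rcases show p i = 0 ∨ p i = 1 ∨ p i = 2 by omega with h | h | h
  · rw [if_pos h]
    exact rim_ne_zero i
  · rw [if_neg (by omega : ¬ p i = 0), if_pos h]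
    intro hc
    have := rim_injective hc
    exact zmod_one_nz (by linear_combination this)
  · rw [if_neg (by omega : ¬ p i = 0), if_neg (by omega : ¬ p i = 1)]
    intro hc
    have := rim_injective hc
    exact zmod_one_nz (by linear_combination -this)

private lemma eo_eq_of_zero {p : ZMod (m + 3) → Fin 3} {i : ZMod (m + 3)} (h : p i = 0) :
    eo m p i = s(rim m i, 0) := by simp [eo, parentV, h]

private lemma eo_eq_of_one {p : ZMod (m + 3) → Fin 3} {i : ZMod (m + 3)} (h : p i = 1) :
    eo m p i = s(rim m i, rim m (i - 1)) := by simp [eo, parentV, h]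

private lemma eo_eq_of_two {p : ZMod (m + 3) → Fin 3} {i : ZMod (m + 3)} (h : p i = 2) :
    eo m p i = s(rim m i, rim m (i + 1)) := by
  have h0 : p i ≠ 0 := by omega
  have h1 : p i ≠ 1 := by omega
  simp [eo, parentV, h0, h1]

private lemma sub_one_ne (i : ZMod (m + 3)) : i - 1 ≠ i := by
  intro h
  exact zmod_one_nz (by linear_combination -h)

private lemma add_one_ne (i : ZMod (m + 3)) : i + 1 ≠ i := by
  intro h
  exact zmod_one_nz (by linear_combination h)

private lemma add_one_ne_sub_one (i : ZMod (m + 3)) : i + 1 ≠ i - 1 := by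
  intro h
  exact zmod_two_nz (by linear_combination h)

/-- hub membership lemma -/
private lemma hub_mem_iff (p : ZMod (m + 3) → Fin 3) (j : ZMod (m + 3)) :
    s(rim m j, (0 : Fin (m + 3 + 1))) ∈ Fp m p ↔ p j = 0 := by
  constructor
  · rintro ⟨i, hi⟩
    rcases show p i = 0 ∨ p i = 1 ∨ p i = 2 by omega with h | h | h
    · rw [eo_eq_of_zero h, Sym2.eq_iff] at hi
      rcases hi with ⟨h1, _⟩ | ⟨h1, h2⟩
      · rwa [← rim_injective h1]
      · exact absurd h2.symm (rim_ne_zero j)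
    · rw [eo_eq_of_one h, Sym2.eq_iff] at hi
      rcases hi with ⟨_, h2⟩ | ⟨h1, _⟩
      · exact absurd h2 (rim_ne_zero _)
      · exact absurd h1 (rim_ne_zero _)
    · rw [eo_eq_of_two h, Sym2.eq_iff] at hi
      rcases hi with ⟨_, h2⟩ | ⟨h1, _⟩
      · exact absurd h2 (rim_ne_zero _)
      · exact absurd h1 (rim_ne_zero _)
  · intro h
    exact ⟨j, eo_eq_of_zero h⟩

/-- rim edge membership lemma -/
private lemma rimedge_mem_iff (p : ZMod (m + 3) → Fin 3) (j : ZMod (m + 3)) :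
    s(rim m j, rim m (j + 1)) ∈ Fp m p ↔ (p j = 2 ∨ p (j + 1) = 1) := by
  constructor
  · rintro ⟨i, hi⟩
    rcases show p i = 0 ∨ p i = 1 ∨ p i = 2 by omega with h | h | h
    · rw [eo_eq_of_zero h, Sym2.eq_iff] at hi
      rcases hi with ⟨_, h2⟩ | ⟨_, h2⟩
      · exact absurd h2.symm (rim_ne_zero _)
      · exact absurd h2.symm (rim_ne_zero _)
    · rw [eo_eq_of_one h, Sym2.eq_iff] at hi
      rcases hi with ⟨h1, h2⟩ | ⟨h1, h2⟩
      · -- i = j, i - 1 = j + 1 : impossible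
        exfalso
        have e1 := rim_injective h1
        have e2 := rim_injective h2
        apply zmod_two_nz (m := m)
        linear_combination e1 - e2
      · -- i = j + 1, i - 1 = j : p (j+1) = 1
        right
        rw [← rim_injective h1]
        exact h
    · rw [eo_eq_of_two h, Sym2.eq_iff] at hi
      rcases hi with ⟨h1, h2⟩ | ⟨h1, h2⟩
      · left
        rw [← rim_injective h1]
        exact h
      · -- i = j + 1, i + 1 = j : impossible
        exfalso
        have e1 := rim_injective h1
        have e2 := rim_injective h2
        apply zmod_two_nz (m := m)
        linear_combination e2 - e1
  · rintro (h | h)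
    · exact ⟨j, eo_eq_of_two h⟩
    · refine ⟨j + 1, ?_⟩
      rw [eo_eq_of_one h]
      rw [Sym2.eq_iff]
      right
      refine ⟨rfl, ?_⟩
      congr 1
      ring

/-- injectivity of the edge assignment, given noRL -/
private lemma eo_injective {p : ZMod (m + 3) → Fin 3} (hp : noRL m p) :
    Function.Injective (eo m p) := by
  intro i j hij
  by_contra hne
  rcases show p i = 0 ∨ p i = 1 ∨ p i = 2 by omega with hi | hi | hi <;>
    rcases show p j = 0 ∨ p j = 1 ∨ p j = 2 by omega with hj | hj | hj
  · rw [eo_eq_of_zero hi, eo_eq_of_zero hj, Sym2.eq_iff] at hij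
    rcases hij with ⟨h1, _⟩ | ⟨h1, _⟩
    · exact hne (rim_injective h1)
    · exact absurd h1 (rim_ne_zero _)
  · rw [eo_eq_of_zero hi, eo_eq_of_one hj, Sym2.eq_iff] at hij
    rcases hij with ⟨_, h2⟩ | ⟨_, h2⟩ <;> exact absurd h2.symm (rim_ne_zero _)
  · rw [eo_eq_of_zero hi, eo_eq_of_two hj, Sym2.eq_iff] at hij
    rcases hij with ⟨_, h2⟩ | ⟨_, h2⟩ <;> exact absurd h2.symm (rim_ne_zero _)
  · rw [eo_eq_of_one hi, eo_eq_of_zero hj, Sym2.eq_iff] at hij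
    rcases hij with ⟨_, h2⟩ | ⟨h1, _⟩
    · exact absurd h2 (rim_ne_zero _)
    · exact absurd h1 (rim_ne_zero _)
  · rw [eo_eq_of_one hi, eo_eq_of_one hj, Sym2.eq_iff] at hij
    rcases hij with ⟨h1, _⟩ | ⟨h1, h2⟩
    · exact hne (rim_injective h1)
    · have e1 := rim_injective h1
      have e2 := rim_injective h2
      exact zmod_two_nz (m := m) (by linear_combination e1 - e2)
  · rw [eo_eq_of_one hi, eo_eq_of_two hj, Sym2.eq_iff] at hij
    rcases hij with ⟨h1, h2⟩ | ⟨h1, h2⟩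
    · have e1 := rim_injective h1
      have e2 := rim_injective h2
      exact zmod_two_nz (m := m) (by linear_combination e1 - e2)
    · have e1 := rim_injective h1
      exact hp j ⟨hj, by rw [e1] at hi; exact hi⟩
  · rw [eo_eq_of_two hi, eo_eq_of_zero hj, Sym2.eq_iff] at hij
    rcases hij with ⟨_, h2⟩ | ⟨h1, _⟩
    · exact absurd h2 (rim_ne_zero _)
    · exact absurd h1 (rim_ne_zero _)
  · rw [eo_eq_of_two hi, eo_eq_of_one hj, Sym2.eq_iff] at hij
    rcases hij with ⟨h1, h2⟩ | ⟨h1, h2⟩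
    · have e1 := rim_injective h1
      have e2 := rim_injective h2
      exact zmod_two_nz (m := m) (by linear_combination e2 - e1)
    · have e2 := rim_injective h2
      exact hp i ⟨hi, by rw [e2]; exact hj⟩
  · rw [eo_eq_of_two hi, eo_eq_of_two hj, Sym2.eq_iff] at hij
    rcases hij with ⟨h1, _⟩ | ⟨h1, h2⟩
    · exact hne (rim_injective h1)
    · have e1 := rim_injective h1
      have e2 := rim_injective h2
      exact zmod_two_nz (m := m) (by linear_combination e2 - e1)

private lemma parentV_of_zero {p : ZMod (m + 3) → Fin 3} {i : ZMod (m + 3)} (h : p i = 0) :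
    parentV m p i = 0 := by simp [parentV, h]

private lemma parentV_of_one {p : ZMod (m + 3) → Fin 3} {i : ZMod (m + 3)} (h : p i = 1) :
    parentV m p i = rim m (i - 1) := by simp [parentV, h]

private lemma parentV_of_two {p : ZMod (m + 3) → Fin 3} {i : ZMod (m + 3)} (h : p i = 2) :
    parentV m p i = rim m (i + 1) := by
  have h0 : p i ≠ 0 := by omega
  have h1 : p i ≠ 1 := by omega
  simp [parentV, h0, h1]

private lemma adj_parent (p : ZMod (m + 3) → Fin 3) (i : ZMod (m + 3)) :
    (fromEdgeSet (Fp m p)).Adj (rim m i) (parentV m p i) := by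
  rw [fromEdgeSet_adj]
  exact ⟨⟨i, rfl⟩, parentV_ne p i⟩

private lemma reachAuxL {p : ZMod (m + 3) → Fin 3} :
    ∀ (k : ℕ) (i : ZMod (m + 3)), p (i - (k : ZMod (m + 3))) = 0 →
      (∀ l : ℕ, l < k → p (i - (l : ZMod (m + 3))) = 1) →
      (fromEdgeSet (Fp m p)).Reachable (rim m i) 0 := by
  intro k
  induction k with
  | zero =>
    intro i h0 _
    simp only [Nat.cast_zero, sub_zero] at h0
    have := adj_parent (m := m) p i
    rw [parentV_of_zero h0] at this
    exact this.reachable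
  | succ k ih =>
    intro i h0 hl
    have hpi : p i = 1 := by
      have := hl 0 (by omega)
      simpa using this
    have hadj := adj_parent (m := m) p i
    rw [parentV_of_one hpi] at hadj
    refine hadj.reachable.trans (ih (i - 1) ?_ ?_)
    · rw [show i - 1 - (k : ZMod (m + 3)) = i - ((k + 1 : ℕ) : ZMod (m + 3)) by push_cast; ring]
      exact h0
    · intro l hlk
      rw [show i - 1 - (l : ZMod (m + 3)) = i - ((l + 1 : ℕ) : ZMod (m + 3)) by push_cast; ring]
      exact hl (l + 1) (by omega)

private lemma reachAuxR {p : ZMod (m + 3) → Fin 3} :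
    ∀ (k : ℕ) (i : ZMod (m + 3)), p (i + (k : ZMod (m + 3))) = 0 →
      (∀ l : ℕ, l < k → p (i + (l : ZMod (m + 3))) = 2) →
      (fromEdgeSet (Fp m p)).Reachable (rim m i) 0 := by
  intro k
  induction k with
  | zero =>
    intro i h0 _
    simp only [Nat.cast_zero, add_zero] at h0
    have := adj_parent (m := m) p i
    rw [parentV_of_zero h0] at this
    exact this.reachable
  | succ k ih =>
    intro i h0 hl
    have hpi : p i = 2 := by
      have := hl 0 (by omega)
      simpa using this
    have hadj := adj_parent (m := m) p i
    rw [parentV_of_two hpi] at hadj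
    refine hadj.reachable.trans (ih (i + 1) ?_ ?_)
    · rw [show i + 1 + (k : ZMod (m + 3)) = i + ((k + 1 : ℕ) : ZMod (m + 3)) by push_cast; ring]
      exact h0
    · intro l hlk
      rw [show i + 1 + (l : ZMod (m + 3)) = i + ((l + 1 : ℕ) : ZMod (m + 3)) by push_cast; ring]
      exact hl (l + 1) (by omega)

private lemma zmod_sub_cast_val (i j : ZMod (m + 3)) :
    i - (((i - j).val : ℕ) : ZMod (m + 3)) = j := by
  rw [ZMod.natCast_val, ZMod.cast_id]
  ring

private lemma zmod_add_cast_val (i j : ZMod (m + 3)) :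
    i + (((j - i).val : ℕ) : ZMod (m + 3)) = j := by
  rw [ZMod.natCast_val, ZMod.cast_id]
  ring

private lemma rim_reach_zero {p : ZMod (m + 3) → Fin 3} (hg : good m p) (i : ZMod (m + 3)) :
    (fromEdgeSet (Fp m p)).Reachable (rim m i) 0 := by
  obtain ⟨hnoRL, hc1, hc2⟩ := hg
  rcases show p i = 0 ∨ p i = 1 ∨ p i = 2 by omega with h | h | h
  · have := adj_parent (m := m) p i
    rw [parentV_of_zero h] at this
    exact this.reachable
  · have hex : ∃ k : ℕ, p (i - (k : ZMod (m + 3))) ≠ 1 := by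
      by_contra hcon
      push_neg at hcon
      apply hc1
      funext j
      have := hcon ((i - j).val)
      rwa [zmod_sub_cast_val] at this
    classical
    set k0 := Nat.find hex with hk0
    have hspec : p (i - (k0 : ZMod (m + 3))) ≠ 1 := Nat.find_spec hex
    have hmin : ∀ l : ℕ, l < k0 → p (i - (l : ZMod (m + 3))) = 1 := by
      intro l hl
      have := Nat.find_min hex hl
      simpa using this
    have hk0ne : k0 ≠ 0 := by
      intro hc
      rw [hc] at hspec
      simp only [Nat.cast_zero, sub_zero] at hspec
      exact hspec h
    have hnot2 : p (i - (k0 : ZMod (m + 3))) ≠ 2 := by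
      intro hc
      apply hnoRL (i - (k0 : ZMod (m + 3)))
      refine ⟨hc, ?_⟩
      have : i - (k0 : ZMod (m + 3)) + 1 = i - ((k0 - 1 : ℕ) : ZMod (m + 3)) := by
        rw [Nat.cast_sub (by omega : 1 ≤ k0)]
        push_cast
        ring
      rw [this]
      exact hmin (k0 - 1) (by omega)
    exact reachAuxL k0 i (by omega) hmin
  · have hex : ∃ k : ℕ, p (i + (k : ZMod (m + 3))) ≠ 2 := by
      by_contra hcon
      push_neg at hcon
      apply hc2
      funext j
      have := hcon ((j - i).val)
      rwa [zmod_add_cast_val] at this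
    classical
    set k0 := Nat.find hex with hk0
    have hspec : p (i + (k0 : ZMod (m + 3))) ≠ 2 := Nat.find_spec hex
    have hmin : ∀ l : ℕ, l < k0 → p (i + (l : ZMod (m + 3))) = 2 := by
      intro l hl
      have := Nat.find_min hex hl
      simpa using this
    have hk0ne : k0 ≠ 0 := by
      intro hc
      rw [hc] at hspec
      simp only [Nat.cast_zero, add_zero] at hspec
      exact hspec h
    have hnot1 : p (i + (k0 : ZMod (m + 3))) ≠ 1 := by
      intro hc
      apply hnoRL (i + ((k0 - 1 : ℕ) : ZMod (m + 3)))
      constructor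
      · exact hmin (k0 - 1) (by omega)
      · have : i + ((k0 - 1 : ℕ) : ZMod (m + 3)) + 1 = i + (k0 : ZMod (m + 3)) := by
          rw [Nat.cast_sub (by omega : 1 ≤ k0)]
          push_cast
          ring
        rw [this]
        exact hc
    exact reachAuxR k0 i (by omega) hmin

private lemma Fp_connected {p : ZMod (m + 3) → Fin 3} (hg : good m p) :
    (fromEdgeSet (Fp m p)).Connected := by
  rw [SimpleGraph.connected_iff]
  refine ⟨?_, ⟨0⟩⟩
  have key : ∀ a : Fin (m + 3 + 1), (fromEdgeSet (Fp m p)).Reachable a 0 := by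
    intro a
    by_cases ha : a = 0
    · rw [ha]
    · obtain ⟨i, rfl⟩ := rim_surj a ha
      exact rim_reach_zero hg i
  intro a b
  exact (key a).trans (key b).symm

private lemma Fp_subset (p : ZMod (m + 3) → Fin 3) :
    Fp m p ⊆ (wheelGraph (m + 3)).edgeSet := by
  rintro e ⟨i, rfl⟩
  show s(rim m i, parentV m p i) ∈ _
  rw [SimpleGraph.mem_edgeSet]
  rcases show p i = 0 ∨ p i = 1 ∨ p i = 2 by omega with h | h | h
  · rw [parentV_of_zero h]; exact wheel_adj_hub i
  · rw [parentV_of_one h]; exact wheel_adj_pred i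
  · rw [parentV_of_two h]; exact wheel_adj_succ i

private lemma Fp_ncard {p : ZMod (m + 3) → Fin 3} (hp : noRL m p) :
    (Fp m p).ncard = m + 3 := by
  rw [Fp, ← Set.image_univ, Set.ncard_image_of_injective _ (eo_injective hp),
    Set.ncard_univ, Nat.card_zmod]

private lemma Fp_noDiag (p : ZMod (m + 3) → Fin 3) :
    Fp m p \ {e | e.IsDiag} = Fp m p := by
  ext e
  simp only [Set.mem_diff, Set.mem_setOf_eq, and_iff_left_iff_imp]
  rintro ⟨i, rfl⟩ hd
  exact parentV_ne p i (Sym2.mk_isDiag_iff.mp hd)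

private lemma Fp_isTree {p : ZMod (m + 3) → Fin 3} (hg : good m p) :
    (fromEdgeSet (Fp m p)).IsTree := by
  classical
  haveI : Fintype ((fromEdgeSet (Fp m p)).edgeSet) := (Set.toFinite _).fintype
  apply isTree_of_connected_of_card (Fp_connected hg)
  have hedge : (fromEdgeSet (Fp m p)).edgeSet = Fp m p := by
    rw [SimpleGraph.edgeSet_fromEdgeSet]; exact Fp_noDiag p
  have : (fromEdgeSet (Fp m p)).edgeFinset.card = (Fp m p).ncard := by
    rw [SimpleGraph.edgeFinset, ← Set.ncard_eq_toFinset_card']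
    rw [hedge]
  rw [this, Fp_ncard hg.1, Fintype.card_fin]


private lemma prop_claim {p1 p2 : ZMod (m + 3) → Fin 3} (hg1 : good m p1) (hg2 : good m p2)
    (heq : Fp m p1 = Fp m p2) {i : ZMod (m + 3)} (h2i : p2 i = 2) (h1i : p1 i = 1) : False := by
  have step : ∀ j, p2 j = 2 → p1 j = 1 → (p2 (j + 1) = 2 ∧ p1 (j + 1) = 1) := by
    intro j hj2 hj1
    have hmem : s(rim m j, rim m (j + 1)) ∈ Fp m p1 := by
      rw [heq]
      exact (rimedge_mem_iff p2 j).mpr (Or.inl hj2)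
    have h1' : p1 (j + 1) = 1 := by
      rcases (rimedge_mem_iff p1 j).mp hmem with h | h
      · omega
      · exact h
    have h2ne1 : p2 (j + 1) ≠ 1 := fun hc => hg2.1 j ⟨hj2, hc⟩
    have h2ne0 : p2 (j + 1) ≠ 0 := by
      intro hc
      have : s(rim m (j + 1), (0 : Fin (m + 3 + 1))) ∈ Fp m p1 := by
        rw [heq]
        exact (hub_mem_iff p2 (j + 1)).mpr hc
      have := (hub_mem_iff p1 (j + 1)).mp this
      omega
    exact ⟨by omega, h1'⟩
  have key : ∀ k : ℕ, p2 (i + (k : ZMod (m + 3))) = 2 := by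
    have key' : ∀ k : ℕ, p2 (i + (k : ZMod (m + 3))) = 2 ∧ p1 (i + (k : ZMod (m + 3))) = 1 := by
      intro k
      induction k with
      | zero => simpa using ⟨h2i, h1i⟩
      | succ k ih =>
        have := step _ ih.1 ih.2
        rwa [show i + (k : ZMod (m + 3)) + 1 = i + ((k + 1 : ℕ) : ZMod (m + 3)) by
          push_cast; ring] at this
    exact fun k => (key' k).1
  apply hg2.2.2
  funext j
  have := key ((j - i).val)
  rwa [zmod_add_cast_val] at this

private lemma Fp_injOn : Set.InjOn (Fp m) {p | good m p} := by
  intro p1 h1 p2 h2 heq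
  by_contra hne
  have hex : ∃ i, p1 i ≠ p2 i := by
    by_contra hcon
    push_neg at hcon
    exact hne (funext hcon)
  obtain ⟨i, hi⟩ := hex
  have hub : p1 i = 0 ↔ p2 i = 0 := by
    rw [← hub_mem_iff p1 i, heq, hub_mem_iff]
  rcases show p1 i = 0 ∨ p1 i = 1 ∨ p1 i = 2 by omega with h | h | h
  · exact hi (by omega)
  · have h2i : p2 i = 2 := by
      have := hub.not
      rcases show p2 i = 0 ∨ p2 i = 1 ∨ p2 i = 2 by omega with h' | h' | h'
      · omega
      · omega
      · exact h'
    exact prop_claim h1 h2 heq h2i h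
  · have h2i : p2 i = 1 := by
      rcases show p2 i = 0 ∨ p2 i = 1 ∨ p2 i = 2 by omega with h' | h' | h'
      · omega
      · exact h'
      · omega
    exact prop_claim h2 h1 heq.symm h h2i

private lemma tree_eq_Fp {F : Set (Sym2 (Fin (m + 3 + 1)))}
    (hsub : F ⊆ (wheelGraph (m + 3)).edgeSet) (htree : (fromEdgeSet F).IsTree) :
    ∃ p, good m p ∧ Fp m p = F := by
  classical
  set H := fromEdgeSet F with hH
  have hc : H.Connected := htree.isConnected
  have hex := fun i : ZMod (m + 3) => exists_adj_dist hc (rim_ne_zero i) (r := 0)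
  choose u hu hd using hex
  have hmemF : ∀ i, s(rim m i, u i) ∈ F := by
    intro i
    have := hu i
    rw [hH, fromEdgeSet_adj] at this
    exact this.1
  have hwadj : ∀ i, (wheelGraph (m + 3)).Adj (rim m i) (u i) := by
    intro i
    rw [← SimpleGraph.mem_edgeSet]
    exact hsub (hmemF i)
  have hcases := fun i => wheel_adj_characterize (hwadj i)
  set p : ZMod (m + 3) → Fin 3 :=
    fun i => if u i = 0 then 0 else if u i = rim m (i - 1) then 1 else 2 with hp
  have hp0 : ∀ i, p i = 0 ↔ u i = 0 := by
    intro i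
    rw [hp]
    by_cases hc0 : u i = 0
    · simp [hc0]
    · by_cases hc1 : u i = rim m (i - 1) <;> simp [hc0, hc1]
  have hp1 : ∀ i, p i = 1 ↔ u i = rim m (i - 1) := by
    intro i
    rw [hp]
    by_cases hc0 : u i = 0
    · simp [hc0]
      intro hc
      exact absurd hc.symm (rim_ne_zero _)
    · by_cases hc1 : u i = rim m (i - 1)
      · simp [hc0, hc1, rim_ne_zero]
      · simp [hc0, hc1]
  have hp2 : ∀ i, p i = 2 → u i = rim m (i + 1) := by
    intro i h2
    rcases hcases i with h | h | h
    · rw [hp] at h2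
      simp [h] at h2
    · exact h
    · exfalso
      rw [hp] at h2
      simp only [h] at h2
      rw [if_neg (rim_ne_zero (m := m) (i - 1))] at h2
      exact absurd h2 (by decide)
  have hpv : ∀ i, parentV m p i = u i := by
    intro i
    rcases show p i = 0 ∨ p i = 1 ∨ p i = 2 by omega with h | h | h
    · rw [parentV_of_zero h, (hp0 i).mp h]
    · rw [parentV_of_one h, (hp1 i).mp h]
    · rw [parentV_of_two h, hp2 i h]
  have hFp_sub : Fp m p ⊆ F := by
    rintro e ⟨i, rfl⟩
    show s(rim m i, parentV m p i) ∈ F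
    rw [hpv i]
    exact hmemF i
  have hgood : good m p := by
    refine ⟨?_, ?_, ?_⟩
    · intro i ⟨h2, h1⟩
      have e2 := hp2 i h2
      have e1 := (hp1 (i + 1)).mp h1
      rw [show i + 1 - 1 = i by ring] at e1
      have d2 := hd i
      have d1 := hd (i + 1)
      rw [e2] at d2
      rw [e1] at d1
      omega
    · intro hcon
      have hall : ∀ i, H.dist (rim m (i - 1)) 0 + 1 = H.dist (rim m i) 0 := by
        intro i
        have : p i = 1 := by rw [hcon]
        have := (hp1 i).mp this
        have hdi := hd i
        rwa [this] at hdi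
      have desc : ∀ (k : ℕ) (i : ZMod (m + 3)),
          H.dist (rim m i) 0 = H.dist (rim m (i - (k : ZMod (m + 3)))) 0 + k := by
        intro k
        induction k with
        | zero => intro i; simp
        | succ k ih =>
          intro i
          have h1 := hall i
          have h2 := ih (i - 1)
          rw [show i - 1 - (k : ZMod (m + 3)) = i - ((k + 1 : ℕ) : ZMod (m + 3)) by
            push_cast; ring] at h2
          omega
      have := desc (m + 3) 0
      rw [ZMod.natCast_self, sub_zero] at this
      omega
    · intro hcon
      have hall : ∀ i, H.dist (rim m (i + 1)) 0 + 1 = H.dist (rim m i) 0 := by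
        intro i
        have h2 : p i = 2 := by rw [hcon]
        have := hp2 i h2
        have hdi := hd i
        rwa [this] at hdi
      have desc : ∀ (k : ℕ) (i : ZMod (m + 3)),
          H.dist (rim m i) 0 = H.dist (rim m (i + (k : ZMod (m + 3)))) 0 + k := by
        intro k
        induction k with
        | zero => intro i; simp
        | succ k ih =>
          intro i
          have h1 := hall i
          have h2 := ih (i + 1)
          rw [show i + 1 + (k : ZMod (m + 3)) = i + ((k + 1 : ℕ) : ZMod (m + 3)) by
            push_cast; ring] at h2
          omega
      have := desc (m + 3) 0
      rw [ZMod.natCast_self, add_zero] at this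
      omega
  refine ⟨p, hgood, ?_⟩
  haveI : Fintype (H.edgeSet) := (Set.toFinite _).fintype
  have hFnd : F \ {e | e.IsDiag} = F := by
    ext e
    simp only [Set.mem_diff, Set.mem_setOf_eq, and_iff_left_iff_imp]
    intro he
    exact (wheelGraph (m + 3)).not_isDiag_of_mem_edgeSet (hsub he)
  have hFcard : F.ncard = m + 3 := by
    have h1 := htree.card_edgeFinset
    rw [Fintype.card_fin] at h1
    have h2 : H.edgeSet = F := by rw [hH, SimpleGraph.edgeSet_fromEdgeSet]; exact hFnd
    have h3 : H.edgeFinset.card = F.ncard := by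
      rw [SimpleGraph.edgeFinset, ← Set.ncard_eq_toFinset_card', h2]
    omega
  exact Set.eq_of_subset_of_ncard_le hFp_sub (by rw [hFcard, Fp_ncard hgood.1])

private lemma spanning_eq_image :
    spanningTreeSet (wheelGraph (m + 3)) = Fp m '' {p | good m p} := by
  ext F
  constructor
  · rintro ⟨hsub, htree⟩
    obtain ⟨p, hg, hFp⟩ := tree_eq_Fp hsub htree
    exact ⟨p, hg, hFp⟩
  · rintro ⟨p, hg, rfl⟩
    exact ⟨Fp_subset p, Fp_isTree hg⟩

private lemma spanning_ncard_eq :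
    (spanningTreeSet (wheelGraph (m + 3))).ncard = {p | good m p}.ncard := by
  rw [spanning_eq_image, Set.ncard_image_of_injOn Fp_injOn]


private instance noRL_dec : DecidablePred (noRL m) := fun p =>
  inferInstanceAs (Decidable (∀ i, ¬(p i = 2 ∧ p (i + 1) = 1)))

private def cycEquivAux (a : Fin 3) :
    {p : ZMod (m + 3) → Fin 3 // noRL m p ∧ p 0 = a} ≃ Slin (m + 3) a a where
  toFun p :=
    ⟨fun j : Fin (m + 3 + 1) => p.1 ((j.val : ℕ) : ZMod (m + 3)), by
      refine ⟨?_, ?_, ?_⟩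
      · intro i
        have key := p.2.1 ((i.val : ℕ) : ZMod (m + 3))
        have h1 : (((i.castSucc : Fin (m + 3 + 1)).val : ℕ) : ZMod (m + 3)) =
            ((i.val : ℕ) : ZMod (m + 3)) := rfl
        have h2 : (((i.succ : Fin (m + 3 + 1)).val : ℕ) : ZMod (m + 3)) =
            ((i.val : ℕ) : ZMod (m + 3)) + 1 := by
          show (((i.val + 1 : ℕ)) : ZMod (m + 3)) = _
          push_cast
          ring
        show ¬(p.1 (((i.castSucc : Fin (m + 3 + 1)).val : ℕ) : ZMod (m + 3)) = 2 ∧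
          p.1 (((i.succ : Fin (m + 3 + 1)).val : ℕ) : ZMod (m + 3)) = 1)
        rw [h1, h2]
        exact key
      · show p.1 (((0 : Fin (m + 3 + 1)).val : ℕ) : ZMod (m + 3)) = a
        rw [show (((0 : Fin (m + 3 + 1)).val : ℕ) : ZMod (m + 3)) = 0 by norm_num]
        exact p.2.2
      · show p.1 (((Fin.last (m + 3)).val : ℕ) : ZMod (m + 3)) = a
        rw [show (((Fin.last (m + 3)).val : ℕ) : ZMod (m + 3)) = 0 by
          show ((m + 3 : ℕ) : ZMod (m + 3)) = 0
          exact ZMod.natCast_self _]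
        exact p.2.2⟩
  invFun f :=
    ⟨fun i : ZMod (m + 3) => f.1 ⟨i.val, by have := ZMod.val_lt i; omega⟩, by
      haveI : Fact (1 < m + 3) := ⟨by omega⟩
      constructor
      · intro i hcon
        have hvlt := ZMod.val_lt i
        have hvlt1 := ZMod.val_lt (i + 1)
        have hc2 : f.1 ⟨i.val, by omega⟩ = 2 := hcon.1
        have hc1 : f.1 ⟨(i + 1).val, by omega⟩ = 1 := hcon.2
        haveI : Fact (1 < m + 3) := ⟨by omega⟩
        have hadd : (i + 1).val = (i.val + 1) % (m + 3) := by
          rw [ZMod.val_add, ZMod.val_one]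
        by_cases hsmall : i.val + 1 < m + 3
        · have hv : (i + 1).val = i.val + 1 := by
            rw [hadd, Nat.mod_eq_of_lt hsmall]
          refine f.2.1 ⟨i.val, by omega⟩ ⟨hc2, ?_⟩
          have harg : (⟨i.val, by omega⟩ : Fin (m + 3)).succ =
              (⟨(i + 1).val, by omega⟩ : Fin (m + 3 + 1)) := by
            apply Fin.ext
            simp [hv]
          rw [harg]
          exact hc1
        · have hival : i.val = m + 2 := by omega
          have hv : (i + 1).val = 0 := by
            rw [hadd, hival]
            simp
          refine f.2.1 ⟨m + 2, by omega⟩ ⟨?_, ?_⟩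
          · have harg : ((⟨m + 2, by omega⟩ : Fin (m + 3)).castSucc : Fin (m + 3 + 1)) =
                (⟨i.val, by omega⟩ : Fin (m + 3 + 1)) := by
              apply Fin.ext
              simp [hival]
            rw [harg]
            exact hc2
          · have hsucc : (⟨m + 2, by omega⟩ : Fin (m + 3)).succ = Fin.last (m + 3) := by
              apply Fin.ext
              simp
            rw [hsucc, f.2.2.2, ← f.2.2.1]
            have harg : (⟨(i + 1).val, by omega⟩ : Fin (m + 3 + 1)) = (0 : Fin (m + 3 + 1)) := by
              apply Fin.ext
              simp [hv]
            rw [harg] at hc1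
            exact hc1
      · have hvlt := ZMod.val_lt (0 : ZMod (m + 3))
        show f.1 ⟨(0 : ZMod (m + 3)).val, by omega⟩ = a
        have harg : (⟨(0 : ZMod (m + 3)).val, by omega⟩ : Fin (m + 3 + 1)) = 0 := by
          apply Fin.ext
          simp
        rw [harg]
        exact f.2.2.1⟩
  left_inv := by
    intro p
    apply Subtype.ext
    funext i
    show p.1 ((ZMod.val i : ℕ) : ZMod (m + 3)) = p.1 i
    rw [ZMod.natCast_val, ZMod.cast_id]
  right_inv := by
    intro f
    apply Subtype.ext
    funext j
    have hvlt := ZMod.val_lt (((j.val : ℕ) : ZMod (m + 3)))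
    show f.1 ⟨(((j.val : ℕ) : ZMod (m + 3))).val, by omega⟩ = f.1 j
    by_cases hj : j.val < m + 3
    · have harg : (⟨(((j.val : ℕ) : ZMod (m + 3))).val, by omega⟩ : Fin (m + 3 + 1)) = j := by
        apply Fin.ext
        show (((j.val : ℕ) : ZMod (m + 3))).val = j.val
        rw [ZMod.val_natCast, Nat.mod_eq_of_lt hj]
      rw [harg]
    · have hjv : j.val = m + 3 := by have := j.isLt; omega
      have h0 : (⟨(((j.val : ℕ) : ZMod (m + 3))).val, by omega⟩ : Fin (m + 3 + 1)) = 0 := by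
        apply Fin.ext
        show (((j.val : ℕ) : ZMod (m + 3))).val = 0
        rw [hjv, ZMod.natCast_self, ZMod.val_zero]
      have hlast : j = Fin.last (m + 3) := by
        apply Fin.ext
        simpa using hjv
      rw [h0, hlast, f.2.2.1, f.2.2.2]

private def cycEquiv : {p : ZMod (m + 3) → Fin 3 // noRL m p} ≃ Σ a : Fin 3, Slin (m + 3) a a :=
  ((Equiv.sigmaFiberEquiv (fun p : {p : ZMod (m + 3) → Fin 3 // noRL m p} => p.1 0)).symm.trans
    (Equiv.sigmaCongrRight (fun a =>
      (Equiv.subtypeSubtypeEquivSubtypeInter (noRL m)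
        (fun g : ZMod (m + 3) → Fin 3 => g 0 = a)).trans (cycEquivAux a))))

private lemma card_cyc :
    Fintype.card {p : ZMod (m + 3) → Fin 3 // noRL m p} =
      Nat.fib (2 * m + 6) + Nat.fib (2 * m + 5) + Nat.fib (2 * m + 5) := by
  rw [Fintype.card_congr cycEquiv, Fintype.card_sigma, Fin.sum_univ_three]
  have h0 : Fintype.card (Slin (m + 3) 0 0) = Nat.fib (2 * m + 6) := by
    have := card_Slin (m + 2) 0 0
    rw [show m + 2 + 1 = m + 3 by ring] at this
    rw [this]
    simp [Etab]
    rw [show 2 * (m + 2) + 2 = 2 * m + 6 by ring]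
  have h1 : Fintype.card (Slin (m + 3) 1 1) = Nat.fib (2 * m + 5) := by
    have := card_Slin (m + 2) 1 1
    rw [show m + 2 + 1 = m + 3 by ring] at this
    rw [this]
    simp [Etab]
    rw [show 2 * (m + 2) + 1 = 2 * m + 5 by ring]
  have h2 : Fintype.card (Slin (m + 3) 2 2) = Nat.fib (2 * m + 5) := by
    have := card_Slin (m + 2) 2 2
    rw [show m + 2 + 1 = m + 3 by ring] at this
    rw [this]
    simp [Etab]
    rw [show 2 * (m + 2) + 1 = 2 * m + 5 by ring]
  rw [h0, h1, h2]

private lemma good_ncard :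
    {p : ZMod (m + 3) → Fin 3 | good m p}.ncard =
      Nat.fib (2 * m + 6) + Nat.fib (2 * m + 5) + Nat.fib (2 * m + 5) - 2 := by
  classical
  have hsplit : {p : ZMod (m + 3) → Fin 3 | good m p} =
      {p : ZMod (m + 3) → Fin 3 | noRL m p} \ {fun _ => 1, fun _ => 2} := by
    ext p
    simp only [Set.mem_setOf_eq, Set.mem_diff, Set.mem_insert_iff, Set.mem_singleton_iff, good]
    tauto
  have hone : (1 : Fin 3) ≠ 2 := by decide
  have htwo : (2 : Fin 3) ≠ 1 := by decide
  have hc1 : (fun _ => 1 : ZMod (m + 3) → Fin 3) ∈ {p : ZMod (m + 3) → Fin 3 | noRL m p} := by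
    intro i hcon
    exact hone hcon.1
  have hc2 : (fun _ => 2 : ZMod (m + 3) → Fin 3) ∈ {p : ZMod (m + 3) → Fin 3 | noRL m p} := by
    intro i hcon
    exact htwo hcon.2
  have hne : (fun _ => 1 : ZMod (m + 3) → Fin 3) ≠ (fun _ => 2) := by
    intro hcon
    exact hone (congrFun hcon 0)
  have hsub : ({fun _ => 1, fun _ => 2} : Set (ZMod (m + 3) → Fin 3)) ⊆
      {p : ZMod (m + 3) → Fin 3 | noRL m p} := by
    rintro p (rfl | rfl)
    · exact hc1
    · exact hc2
  rw [hsplit, Set.ncard_diff hsub, Set.ncard_pair hne]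
  congr 1
  rw [← Nat.card_coe_set_eq]
  have : Nat.card ↥{p : ZMod (m + 3) → Fin 3 | noRL m p} =
      Fintype.card {p : ZMod (m + 3) → Fin 3 // noRL m p} := by
    rw [Nat.card_congr (Equiv.subtypeEquivRight (fun p => Iff.rfl)),
      Nat.card_eq_fintype_card]
    exact Fintype.card_congr (Equiv.subtypeEquivRight (fun p => Iff.rfl))
  rw [this, card_cyc]

end Wheel

/-- For `n ≥ 3`, the number of spanning trees of the wheel graph `W_n` equals
`L_{2n} − 2 = fib(2n−1) + fib(2n+1) − 2`. -/
theorem card_spanningTrees_wheelGraph (n : ℕ) (hn : 3 ≤ n) :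
    (spanningTreeSet (wheelGraph n)).ncard =
      Nat.fib (2 * n - 1) + Nat.fib (2 * n + 1) - 2 := by
  obtain ⟨m, rfl⟩ : ∃ m, n = m + 3 := ⟨n - 3, by omega⟩
  rw [spanning_ncard_eq, good_ncard]
  rw [show 2 * (m + 3) - 1 = 2 * m + 5 by omega, show 2 * (m + 3) + 1 = 2 * m + 7 by omega]
  have f1 : Nat.fib (2 * m + 7) = Nat.fib (2 * m + 5) + Nat.fib (2 * m + 6) := Nat.fib_add_two
  omega
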